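/- Let Z ⊆ F be a weak AXp for an instance (v, c) of classifier κ, and define the restricted classifier κ_Z on the projected feature space 𝔽_Z by κ_Z(y) = 1 iff every x ∈ 𝔽 that projects to y on coordinates Z and satisfies the fixing of Z-coordinates to v has κ(x) = c. Then X ⊆ Z is an AXp of the restricted explanation problem (κ_Z, projection of v, 1) if and only if X is an AXp of the original problem (κ, v, c). -/

import Mathlib

/-- Let Z be a weak AXp for instance (v, c), and let κ_Z be the restricted
classifier on the projection onto Z (κ_Z(y) holds iff every point projecting
to y on Z is classified c). Then X ⊆ Z is an AXp of the restricted problem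
(κ_Z, projection of v, 1) iff X is an AXp of the original problem (κ, v, c). -/
theorem restricted_axp_iff_axp {m : ℕ} {D : Fin m → Type} {K : Type}
    (κ : (∀ i, D i) → K) (v : ∀ i, D i) (c : K) (hvc : κ v = c)
    (Z : Finset (Fin m))
    (hZ : ∀ x : ∀ i, D i, (∀ i ∈ Z, x i = v i) → κ x = c)
    (κZ : (∀ i : {i : Fin m // i ∈ Z}, D i.1) → Prop)
    (hκZ : ∀ y, κZ y ↔
      ∀ x : ∀ i, D i, (∀ (i : Fin m) (h : i ∈ Z), x i = y ⟨i, h⟩) → κ x = c)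
    (X : Finset (Fin m)) (hXZ : X ⊆ Z) :
    ((∀ y : ∀ i : {i : Fin m // i ∈ Z}, D i.1,
        (∀ i ∈ X.subtype (· ∈ Z), y i = v i.1) → κZ y) ∧
      (∀ S ⊂ X.subtype (· ∈ Z),
        ¬ ∀ y : ∀ i : {i : Fin m // i ∈ Z}, D i.1,
            (∀ i ∈ S, y i = v i.1) → κZ y)) ↔
    ((∀ x : ∀ i, D i, (∀ i ∈ X, x i = v i) → κ x = c) ∧
      (∀ X' ⊂ X, ¬ ∀ x : ∀ i, D i, (∀ i ∈ X', x i = v i) → κ x = c)) := by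
  have key : ∀ W : Finset (Fin m), W ⊆ Z →
      ((∀ y : ∀ i : {i : Fin m // i ∈ Z}, D i.1,
          (∀ i ∈ W.subtype (· ∈ Z), y i = v i.1) → κZ y)
        ↔ (∀ x : ∀ i, D i, (∀ i ∈ W, x i = v i) → κ x = c)) := by
    intro W hW
    constructor
    · intro h x hx
      have hy := h (fun i => x i.1) (fun i hi => hx i.1 (Finset.mem_subtype.mp hi))
      exact (hκZ _).mp hy x (fun i hi => rfl)
    · intro h y hy
      rw [hκZ]
      intro x hx
      apply h
      intro i hi
      rw [hx i (hW hi)]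
      exact hy ⟨i, hW hi⟩ (Finset.mem_subtype.mpr hi)
  have ssub : ∀ A B : Finset (Fin m), A ⊆ Z → B ⊆ Z → A ⊂ B →
      A.subtype (· ∈ Z) ⊂ B.subtype (· ∈ Z) := by
    intro A B hA hB hAB
    constructor
    · intro a ha
      exact Finset.mem_subtype.mpr (hAB.subset (Finset.mem_subtype.mp ha))
    · intro hcon
      obtain ⟨b, hbB, hbA⟩ := Finset.exists_of_ssubset hAB
      have : (⟨b, hB hbB⟩ : {i : Fin m // i ∈ Z}) ∈ A.subtype (· ∈ Z) :=
        hcon (Finset.mem_subtype.mpr hbB)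
      exact hbA (Finset.mem_subtype.mp this)
  constructor
  · rintro ⟨h1, h2⟩
    refine ⟨(key X hXZ).mp h1, ?_⟩
    intro X' hX' hcon
    have hX'Z : X' ⊆ Z := hX'.subset.trans hXZ
    exact h2 (X'.subtype (· ∈ Z)) (ssub X' X hX'Z hXZ hX')
      ((key X' hX'Z).mpr hcon)
  · rintro ⟨h1, h2⟩
    refine ⟨(key X hXZ).mpr h1, ?_⟩
    intro S hS hcon
    set X' := S.map (Function.Embedding.subtype (· ∈ Z)) with hX'def
    have hX'Z : X' ⊆ Z := by
      intro a ha
      simp only [hX'def, Finset.mem_map, Function.Embedding.coe_subtype] at ha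
      obtain ⟨b, _, rfl⟩ := ha
      exact b.2
    have hSub : X'.subtype (· ∈ Z) = S := by
      ext a
      rw [Finset.mem_subtype, hX'def, Finset.mem_map]
      constructor
      · rintro ⟨b, hb, hba⟩
        have : b = a := Subtype.ext hba
        exact this ▸ hb
      · intro ha
        exact ⟨a, ha, rfl⟩
    have hXX : X' ⊂ X := by
      constructor
      · intro a ha
        simp only [hX'def, Finset.mem_map, Function.Embedding.coe_subtype] at ha
        obtain ⟨b, hb, rfl⟩ := ha
        exact Finset.mem_subtype.mp (hS.subset hb)
      · intro hcon2
        apply hS.not_subset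
        intro a ha
        have : (a : Fin m) ∈ X' := hcon2 (Finset.mem_subtype.mp ha)
        rw [← hSub]
        exact Finset.mem_subtype.mpr this
    apply h2 X' hXX
    apply (key X' hX'Z).mp
    rw [hSub]
    exact hcon
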